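/- Let (Ω, P) be a probability space and n ∈ ℕ. Let u₁,…,uₙ ∈ L¹(Ω) and set Zₖ = u₁ + ⋯ + uₖ. Let v₁,…,vₙ and w₁,…,wₙ be nonnegative functions in L¹(Ω) such that E[(|Z_{k−1}|² + vₖ²)^{1/2}] + E[wₖ] ≤ E[|Zₖ|] for all 1 ≤ k ≤ n. Then E[(∑_{k=1}^n vₖ²)^{1/2}] + ∑_{k=1}^n E[wₖ] ≤ 2 (E[|Zₙ|])^{1/2} (E[max_{k≤n} |Zₖ|])^{1/2}. -/

import Mathlib

open MeasureTheory Finset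

lemma sqrt_add_sq_le_add (a b : ℝ) (ha : 0 ≤ a) (hb : 0 ≤ b) :
    Real.sqrt (a^2 + b^2) ≤ a + b := by
  have : Real.sqrt (a^2 + b^2) ≤ Real.sqrt ((a+b)^2) := by
    apply Real.sqrt_le_sqrt; nlinarith [mul_nonneg ha hb]
  simpa [Real.sqrt_sq (by linarith : (0:ℝ) ≤ a + b)] using this

lemma div_le_sqrt_sub (a b D : ℝ) (ha : 0 ≤ a) (hb : 0 ≤ b)
    (hD : Real.sqrt (a^2+b^2) + a ≤ D) : b^2 / D ≤ Real.sqrt (a^2+b^2) - a := by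
  set c := Real.sqrt (a^2+b^2) with hc
  have hc2 : c^2 = a^2 + b^2 := Real.sq_sqrt (by positivity)
  have hc0 : 0 ≤ c := Real.sqrt_nonneg _
  rcases eq_or_lt_of_le hb with hb0 | hb0
  · have : c = a := by rw [hc, ← hb0]; simpa using Real.sqrt_sq ha
    simp [← hb0, this]
  · have hca : 0 < c + a := by nlinarith
    have hD0 : 0 < D := lt_of_lt_of_le hca hD
    have h1 : b^2 / D ≤ b^2 / (c + a) := by gcongr
    have h2 : b^2 / (c + a) = c - a := by
      rw [div_eq_iff (ne_of_gt hca)]; nlinarith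
    linarith

lemma sqrt_sq_add_sq_eq (M T : ℝ) (hM : 0 ≤ M) (hT : 0 ≤ T) :
    Real.sqrt (M^2+T^2) = M + T^2 / (Real.sqrt (M^2+T^2) + M) := by
  set c := Real.sqrt (M^2+T^2) with hc
  have hc2 : c^2 = M^2 + T^2 := Real.sq_sqrt (by positivity)
  have hc0 : 0 ≤ c := Real.sqrt_nonneg _
  rcases eq_or_lt_of_le (by positivity : (0:ℝ) ≤ c + M) with h0 | h0
  · have hM0 : M = 0 := by nlinarith
    have hT0 : T = 0 := by nlinarith
    simp [hM0, hT0, hc]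
  · field_simp
    nlinarith

lemma sq_div_le_self (b D : ℝ) (hb : 0 ≤ b) (hbD : b ≤ D) : b^2 / D ≤ b := by
  rcases eq_or_lt_of_le (le_trans hb hbD) with h0 | h0
  · have : b = 0 := le_antisymm (h0 ▸ hbD) hb
    simp [this]
  · rw [div_le_iff₀ h0]; nlinarith

lemma le_amgm (T D l : ℝ) (hT : 0 ≤ T) (hTD : T ≤ D) (hl : 0 < l) :
    T ≤ l/2 * (T^2/D) + D/(2*l) := by
  rcases eq_or_lt_of_le (le_trans hT hTD) with h0 | h0
  · have : T = 0 := le_antisymm (h0 ▸ hTD) hT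
    simp [this]; positivity
  · rw [← sub_nonneg]
    have : l/2 * (T^2/D) + D/(2*l) - T = (l*T - D)^2 / (2*l*D) := by
      field_simp; ring
    rw [this]; positivity

lemma le_sqrt_of_forall (x A B : ℝ) (hA : 0 ≤ A) (hAB : A ≤ B)
    (h : ∀ l : ℝ, 0 < l → x ≤ l/2 * A + B/(2*l)) : x ≤ Real.sqrt (A * B) := by
  have hB : 0 ≤ B := le_trans hA hAB
  rcases eq_or_lt_of_le hB with hB0 | hB0
  · have hA0 : A = 0 := le_antisymm (hB0 ▸ hAB) hA
    have := h 1 one_pos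
    simp [hA0, ← hB0] at this ⊢
    linarith
  · rcases eq_or_lt_of_le hA with hA0 | hA0
    · have hx : x ≤ 0 := by
        apply le_of_forall_pos_le_add
        intro ε hε
        have hl : 0 < B/(2*ε) := by positivity
        have h1 := h _ hl
        have h2 : x ≤ B / (2 * (B/(2*ε))) := by simpa [← hA0] using h1
        calc x ≤ B / (2 * (B/(2*ε))) := h2
        _ = ε := by field_simp
        _ ≤ 0 + ε := by linarith
      calc x ≤ 0 := hx
      _ ≤ _ := Real.sqrt_nonneg _
    · have hl : 0 < Real.sqrt B / Real.sqrt A := by positivity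
      have h1 := h _ hl
      have hsA : (0:ℝ) < Real.sqrt A := Real.sqrt_pos.mpr hA0
      have hsB : (0:ℝ) < Real.sqrt B := Real.sqrt_pos.mpr hB0
      have hA' : Real.sqrt A * Real.sqrt A = A := Real.mul_self_sqrt hA0.le
      have hB' : Real.sqrt B * Real.sqrt B = B := Real.mul_self_sqrt hB0.le
      calc x ≤ Real.sqrt B / Real.sqrt A / 2 * A + B / (2 * (Real.sqrt B / Real.sqrt A)) := h1
      _ = Real.sqrt A * Real.sqrt B := by
          field_simp
          nlinarith [hsA, hsB, hA', hB']
      _ = Real.sqrt (A * B) := (Real.sqrt_mul hA B).symm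

lemma integrable_finset_sup' {Ω : Type*} [MeasurableSpace Ω] {μ : Measure Ω} (f : ℕ → Ω → ℝ)
    (s : Finset ℕ) (hs : s.Nonempty) (hf : ∀ i ∈ s, Integrable (f i) μ) :
    Integrable (fun ω => s.sup' hs fun i => f i ω) μ := by
  induction hs using Finset.Nonempty.cons_induction with
  | singleton a => simpa using hf a (by simp)
  | cons a s h hs ih =>
    have heq : (fun ω => (Finset.cons a s h).sup' (Finset.cons_nonempty h) fun i => f i ω)
        = fun ω => f a ω ⊔ (s.sup' hs fun i => f i ω) := by
      funext ω; exact Finset.sup'_cons hs (f := fun i => f i ω)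
    rw [heq]
    exact (hf a (by simp)).sup (ih fun i hi => hf i (Finset.mem_cons_of_mem hi))

lemma final_arith (x W L m : ℝ) (hW : 0 ≤ W) (hWL : W ≤ L) (hLm : L ≤ m)
    (hx : x ≤ Real.sqrt ((L - W) * (2*m + (L-W)))) :
    x + W ≤ 2 * Real.sqrt L * Real.sqrt m := by
  have hL0 : 0 ≤ L := le_trans hW hWL
  have hm0 : 0 ≤ m := le_trans hL0 hLm
  set rL := Real.sqrt L with hrL
  set rm := Real.sqrt m with hrm
  have hrL0 : 0 ≤ rL := Real.sqrt_nonneg _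
  have hrm0 : 0 ≤ rm := Real.sqrt_nonneg _
  have hL : rL * rL = L := Real.mul_self_sqrt hL0
  have hm : rm * rm = m := Real.mul_self_sqrt hm0
  have hrLm : rL ≤ rm := Real.sqrt_le_sqrt hLm
  have hWr : W ≤ rL * rm := by nlinarith
  have key : (L - W) * (2*m + (L-W)) ≤ (2 * rL * rm - W)^2 := by
    nlinarith [mul_nonneg hW (sq_nonneg (rL - rm)), sq_nonneg (rL - rm),
      mul_nonneg (mul_nonneg hrL0 hrL0) (sq_nonneg (rL - rm))]
  have h2 : Real.sqrt ((L - W) * (2*m + (L-W))) ≤ 2 * rL * rm - W := by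
    calc Real.sqrt ((L - W) * (2*m + (L-W))) ≤ Real.sqrt ((2 * rL * rm - W)^2) :=
          Real.sqrt_le_sqrt key
    _ = 2 * rL * rm - W := Real.sqrt_sq (by nlinarith)
  linarith

theorem stmt_1 {Ω : Type*} [MeasurableSpace Ω] (μ : Measure Ω) [IsProbabilityMeasure μ]
    (n : ℕ) (u : ℕ → Ω → ℂ) (v w : ℕ → Ω → ℝ)
    (hu : ∀ k ∈ Finset.Icc 1 n, Integrable (u k) μ)
    (hv : ∀ k ∈ Finset.Icc 1 n, Integrable (v k) μ)
    (hw : ∀ k ∈ Finset.Icc 1 n, Integrable (w k) μ)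
    (hv0 : ∀ k ∈ Finset.Icc 1 n, ∀ ω, 0 ≤ v k ω)
    (hw0 : ∀ k ∈ Finset.Icc 1 n, ∀ ω, 0 ≤ w k ω)
    (Z : ℕ → Ω → ℂ) (hZ : ∀ k, ∀ ω, Z k ω = ∑ m ∈ Finset.Icc 1 k, u m ω)
    (hyp : ∀ k ∈ Finset.Icc 1 n,
      (∫ ω, Real.sqrt (‖Z (k - 1) ω‖ ^ 2 + v k ω ^ 2) ∂μ) + ∫ ω, w k ω ∂μ
        ≤ ∫ ω, ‖Z k ω‖ ∂μ) :
    (∫ ω, Real.sqrt (∑ k ∈ Finset.Icc 1 n, v k ω ^ 2) ∂μ)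
      + ∑ k ∈ Finset.Icc 1 n, ∫ ω, w k ω ∂μ
      ≤ 2 * Real.sqrt (∫ ω, ‖Z n ω‖ ∂μ)
          * Real.sqrt (∫ ω, (Finset.range (n + 1)).sup' (by simp) (fun k => ‖Z k ω‖) ∂μ) := by
  classical
  -- integrability of Z and |Z|
  have hZint : ∀ k, k ≤ n → Integrable (fun ω => Z k ω) μ := by
    intro k hk
    have heq : (fun ω => Z k ω) = fun ω => ∑ m ∈ Finset.Icc 1 k, u m ω := funext fun ω => hZ k ω
    rw [heq]
    exact integrable_finset_sum _ fun m hm => hu m (by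
      simp only [Finset.mem_Icc] at hm ⊢; exact ⟨hm.1, le_trans hm.2 hk⟩)
  have hZabs : ∀ k, k ≤ n → Integrable (fun ω => ‖Z k ω‖) μ := by
    intro k hk
    have := (hZint k hk).norm
    simpa using this
  have hZ0 : ∀ ω, Z 0 ω = 0 := fun ω => by simpa using hZ 0 ω
  -- the key functions
  set Tf : Ω → ℝ := fun ω => Real.sqrt (∑ k ∈ Finset.Icc 1 n, v k ω ^ 2) with hTf
  set Mf : Ω → ℝ := fun ω => (Finset.range (n+1)).sup' (by simp) fun k => ‖Z k ω‖ with hMf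
  set cf : Ω → ℝ := fun ω => Real.sqrt (Mf ω^2 + Tf ω^2) with hcf
  set Df : Ω → ℝ := fun ω => Real.sqrt (Mf ω^2 + Tf ω^2) + Mf ω with hDf
  have hM0 : ∀ ω, 0 ≤ Mf ω := fun ω =>
    le_trans (norm_nonneg _)
      (Finset.le_sup' (fun k => ‖Z k ω‖) (Finset.mem_range.mpr (Nat.succ_pos n)))
  have hMk : ∀ k, k ≤ n → ∀ ω, ‖Z k ω‖ ≤ Mf ω := fun k hk ω =>
    Finset.le_sup' (fun k => ‖Z k ω‖) (Finset.mem_range.mpr (Nat.lt_succ_of_le hk))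
  have hT0 : ∀ ω, 0 ≤ Tf ω := fun ω => Real.sqrt_nonneg _
  have hsum0 : ∀ ω, 0 ≤ ∑ k ∈ Finset.Icc 1 n, v k ω ^ 2 :=
    fun ω => Finset.sum_nonneg fun k _ => sq_nonneg _
  have hT2 : ∀ ω, Tf ω ^ 2 = ∑ k ∈ Finset.Icc 1 n, v k ω ^ 2 := fun ω => Real.sq_sqrt (hsum0 ω)
  have hbT : ∀ k ∈ Finset.Icc 1 n, ∀ ω, v k ω ≤ Tf ω := by
    intro k hk ω
    rw [hTf]
    calc v k ω = Real.sqrt (v k ω ^ 2) := (Real.sqrt_sq (hv0 k hk ω)).symm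
    _ ≤ _ := Real.sqrt_le_sqrt (Finset.single_le_sum (f := fun i => v i ω ^ 2)
          (fun i _ => sq_nonneg (v i ω)) hk)
  have hc0 : ∀ ω, 0 ≤ cf ω := fun ω => Real.sqrt_nonneg _
  have hcT : ∀ ω, Tf ω ≤ cf ω := by
    intro ω
    rw [hcf]
    calc Tf ω = Real.sqrt (Tf ω ^ 2) := (Real.sqrt_sq (hT0 ω)).symm
    _ ≤ _ := Real.sqrt_le_sqrt (by nlinarith [sq_nonneg (Mf ω)])
  have hD0 : ∀ ω, 0 ≤ Df ω := fun ω => add_nonneg (Real.sqrt_nonneg _) (hM0 ω)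
  have hTD : ∀ ω, Tf ω ≤ Df ω := fun ω => le_trans (hcT ω) (le_add_of_nonneg_right (hM0 ω))
  have hcMT : ∀ ω, cf ω ≤ Mf ω + Tf ω := fun ω => sqrt_add_sq_le_add _ _ (hM0 ω) (hT0 ω)
  -- measurability / integrability
  have hvm : ∀ k ∈ Finset.Icc 1 n, AEStronglyMeasurable (v k) μ := fun k hk => (hv k hk).1
  have hMint : Integrable Mf μ := by
    rw [hMf]
    exact integrable_finset_sup' (fun k ω => ‖Z k ω‖) _ (by simp)
      (fun i hi => hZabs i (Nat.lt_succ_iff.mp (Finset.mem_range.mp hi)))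
  have hTm : AEStronglyMeasurable Tf μ := by
    rw [hTf]
    exact Real.continuous_sqrt.comp_aestronglyMeasurable
      (Finset.aestronglyMeasurable_fun_sum _ fun k hk => (hvm k hk).pow 2)
  have hTint : Integrable Tf μ := by
    apply Integrable.mono' (integrable_finset_sum (Finset.Icc 1 n) (fun k hk => hv k hk)) hTm
    filter_upwards with ω
    rw [Real.norm_of_nonneg (hT0 ω)]
    have hsq : ∑ k ∈ Finset.Icc 1 n, v k ω ^ 2 ≤ (∑ k ∈ Finset.Icc 1 n, v k ω)^2 := by
      rw [sq, Finset.sum_mul]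
      apply Finset.sum_le_sum
      intro i hi
      rw [sq]
      exact mul_le_mul_of_nonneg_left
        (Finset.single_le_sum (f := fun j => v j ω) (fun j hj => hv0 j hj ω) hi) (hv0 i hi ω)
    rw [hTf]
    calc Real.sqrt (∑ k ∈ Finset.Icc 1 n, v k ω ^ 2)
        ≤ Real.sqrt ((∑ k ∈ Finset.Icc 1 n, v k ω)^2) := Real.sqrt_le_sqrt hsq
    _ = ∑ k ∈ Finset.Icc 1 n, v k ω :=
        Real.sqrt_sq (Finset.sum_nonneg fun j hj => hv0 j hj ω)
  have hcm : AEStronglyMeasurable cf μ := by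
    rw [hcf]
    exact Real.continuous_sqrt.comp_aestronglyMeasurable ((hMint.1.pow 2).add (hTm.pow 2))
  have hcint : Integrable cf μ :=
    Integrable.mono' (hMint.add hTint) hcm
      (ae_of_all _ fun ω => by rw [Real.norm_of_nonneg (hc0 ω)]; exact hcMT ω)
  have hDint : Integrable Df μ := hcint.add hMint
  have hDm : AEStronglyMeasurable Df μ := hDint.1
  have hq_int : ∀ k ∈ Finset.Icc 1 n, Integrable (fun ω => v k ω^2 / Df ω) μ := by
    intro k hk
    apply Integrable.mono' (hv k hk) ((((hvm k hk).aemeasurable.pow_const 2).div hDm.aemeasurable).aestronglyMeasurable)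
    filter_upwards with ω
    rw [show ((fun x => v k x ^ 2) / Df) ω = v k ω ^ 2 / Df ω from rfl, Real.norm_of_nonneg (div_nonneg (sq_nonneg _) (hD0 ω))]
    exact sq_div_le_self _ _ (hv0 k hk ω) (le_trans (hbT k hk ω) (hTD ω))
  have hT2D_int : Integrable (fun ω => Tf ω^2 / Df ω) μ := by
    apply Integrable.mono' hTint (((hTm.aemeasurable.pow_const 2).div hDm.aemeasurable).aestronglyMeasurable)
    filter_upwards with ω
    rw [show ((fun x => Tf x ^ 2) / Df) ω = Tf ω ^ 2 / Df ω from rfl, Real.norm_of_nonneg (div_nonneg (sq_nonneg _) (hD0 ω))]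
    exact sq_div_le_self _ _ (hT0 ω) (hTD ω)
  have hs_int : ∀ k ∈ Finset.Icc 1 n,
      Integrable (fun ω => Real.sqrt (‖Z (k-1) ω‖^2 + v k ω^2)) μ := by
    intro k hk
    obtain ⟨hk1, hk2⟩ := Finset.mem_Icc.mp hk
    have hk1n : k - 1 ≤ n := le_trans (Nat.sub_le k 1) hk2
    apply Integrable.mono' ((hZabs _ hk1n).add (hv k hk))
      (Real.continuous_sqrt.comp_aestronglyMeasurable
        (((hZabs _ hk1n).1.pow 2).add ((hvm k hk).pow 2)))
    filter_upwards with ω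
    rw [Real.norm_of_nonneg (Real.sqrt_nonneg _)]
    exact sqrt_add_sq_le_add _ _ (norm_nonneg _) (hv0 k hk ω)
  -- step 1: per-step inequality
  have step1 : ∀ k ∈ Finset.Icc 1 n,
      (∫ ω, v k ω^2 / Df ω ∂μ) ≤ (∫ ω, ‖Z k ω‖ ∂μ)
        - (∫ ω, ‖Z (k-1) ω‖ ∂μ) - ∫ ω, w k ω ∂μ := by
    intro k hk
    obtain ⟨hk1, hk2⟩ := Finset.mem_Icc.mp hk
    have hk1n : k - 1 ≤ n := le_trans (Nat.sub_le k 1) hk2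
    have h1 : (∫ ω, v k ω^2 / Df ω ∂μ)
        ≤ ∫ ω, (Real.sqrt (‖Z (k-1) ω‖^2 + v k ω^2)
            - ‖Z (k-1) ω‖) ∂μ := by
      apply integral_mono (hq_int k hk) ((hs_int k hk).sub (hZabs _ hk1n))
      intro ω
      apply div_le_sqrt_sub _ _ _ (norm_nonneg _) (hv0 k hk ω)
      have hDfw : Df ω = Real.sqrt (Mf ω ^ 2 + Tf ω ^ 2) + Mf ω := rfl
      rw [hDfw]
      have h2 : ‖Z (k-1) ω‖ ≤ Mf ω := hMk _ hk1n ω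
      have h3 : v k ω ≤ Tf ω := hbT k hk ω
      have h4 : Real.sqrt (‖Z (k-1) ω‖^2 + v k ω^2)
          ≤ Real.sqrt (Mf ω^2 + Tf ω^2) := by
        apply Real.sqrt_le_sqrt
        have := pow_le_pow_left₀ (norm_nonneg _) h2 2
        have := pow_le_pow_left₀ (hv0 k hk ω) h3 2
        linarith
      linarith
    rw [integral_sub (hs_int k hk) (hZabs _ hk1n)] at h1
    have h2 := hyp k hk
    linarith
  -- telescoping sum
  set F : ℕ → ℝ := fun k => ∫ ω, ‖Z k ω‖ ∂μ with hF
  have hF0 : F 0 = 0 := by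
    rw [hF]
    have : (fun ω => ‖Z 0 ω‖) = fun _ => (0:ℝ) := by
      funext ω; rw [hZ0 ω]; simp
    simp only [this, integral_zero]
  set Wt := ∑ k ∈ Finset.Icc 1 n, ∫ ω, w k ω ∂μ with hWt
  have step2 : (∫ ω, Tf ω^2 / Df ω ∂μ) ≤ F n - Wt := by
    have hsum : (∫ ω, Tf ω^2/Df ω ∂μ) = ∑ k ∈ Finset.Icc 1 n, ∫ ω, v k ω^2 / Df ω ∂μ := by
      rw [← integral_finset_sum _ (fun k hk => hq_int k hk)]
      congr 1; funext ω
      rw [hT2 ω, Finset.sum_div]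
    have htel : ∀ N : ℕ, ∑ k ∈ Finset.Icc 1 N, (F k - F (k-1)) = F N - F 0 := by
      intro N
      induction N with
      | zero => simp
      | succ N ih =>
        rw [Finset.sum_Icc_succ_top (by omega), ih]
        have : N + 1 - 1 = N := rfl
        rw [this]; ring
    have hle : ∑ k ∈ Finset.Icc 1 n, (∫ ω, v k ω^2 / Df ω ∂μ)
        ≤ ∑ k ∈ Finset.Icc 1 n, ((F k - F (k-1)) - ∫ ω, w k ω ∂μ) := by
      apply Finset.sum_le_sum
      intro k hk
      have := step1 k hk
      rw [hF]; linarith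
    rw [Finset.sum_sub_distrib, htel n, hF0] at hle
    rw [hsum, hWt]
    linarith
  -- step 3: bound on ∫ Df
  set mI := ∫ ω, Mf ω ∂μ with hmI
  have hDeq : ∀ ω, cf ω = Mf ω + Tf ω^2 / Df ω := by
    intro ω
    rw [hcf, hDf]
    exact sqrt_sq_add_sq_eq _ _ (hM0 ω) (hT0 ω)
  have hcI : (∫ ω, cf ω ∂μ) = mI + ∫ ω, Tf ω^2 / Df ω ∂μ := by
    calc (∫ ω, cf ω ∂μ) = ∫ ω, (Mf ω + Tf ω^2/Df ω) ∂μ :=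
          integral_congr_ae (ae_of_all _ hDeq)
    _ = mI + ∫ ω, Tf ω^2 / Df ω ∂μ := integral_add hMint hT2D_int
  have hDI : (∫ ω, Df ω ∂μ) ≤ 2*mI + (F n - Wt) := by
    have h1 : (∫ ω, Df ω ∂μ) = (∫ ω, cf ω ∂μ) + mI := by
      rw [hDf, hmI, ← integral_add hcint hMint]
    rw [h1, hcI]
    linarith [step2]
  -- step 4: the lambda trick
  set A := F n - Wt with hA
  have hP0 : 0 ≤ ∫ ω, Tf ω^2 / Df ω ∂μ :=
    integral_nonneg fun ω => div_nonneg (sq_nonneg _) (hD0 ω)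
  have hA0 : 0 ≤ A := le_trans hP0 step2
  have hm0 : 0 ≤ mI := integral_nonneg hM0
  have hAB : A ≤ 2*mI + A := by linarith
  have hlam : ∀ l : ℝ, 0 < l → (∫ ω, Tf ω ∂μ) ≤ l/2 * A + (2*mI + A)/(2*l) := by
    intro l hl
    have h1 : (∫ ω, Tf ω ∂μ) ≤ ∫ ω, (l/2 * (Tf ω^2/Df ω) + Df ω/(2*l)) ∂μ := by
      apply integral_mono hTint ((hT2D_int.const_mul _).add (hDint.div_const _))
      intro ω
      exact le_amgm _ _ _ (hT0 ω) (hTD ω) hl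
    rw [integral_add (hT2D_int.const_mul _) (hDint.div_const _),
      integral_const_mul, integral_div] at h1
    have h2 : l/2 * (∫ ω, Tf ω^2/Df ω ∂μ) ≤ l/2 * A := by
      apply mul_le_mul_of_nonneg_left step2 (by positivity)
    have h3 : (∫ ω, Df ω ∂μ)/(2*l) ≤ (2*mI + A)/(2*l) := by
      gcongr
    linarith
  have hxA : (∫ ω, Tf ω ∂μ) ≤ Real.sqrt (A * (2*mI + A)) :=
    le_sqrt_of_forall _ _ _ hA0 hAB hlam
  have hWt0 : 0 ≤ Wt := Finset.sum_nonneg fun k hk => integral_nonneg (hw0 k hk)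
  have hWtL : Wt ≤ F n := by rw [hA] at hA0; linarith
  have hLm : F n ≤ mI := by
    rw [hF, hmI]
    exact integral_mono (hZabs n le_rfl) hMint (hMk n le_rfl)
  have hxA' : (∫ ω, Tf ω ∂μ) ≤ Real.sqrt ((F n - Wt) * (2*mI + (F n - Wt))) := hxA
  have final := final_arith (∫ ω, Tf ω ∂μ) Wt (F n) mI hWt0 hWtL hLm hxA'
  exact final
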